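/- Let E be a real inner product space and f : E → ℝ a differentiable function that is both μ-strongly convex (f(θ) ≥ f(θ') + ⟪∇f(θ'), θ − θ'⟫ + (μ/2)‖θ − θ'‖² for all θ, θ') and L-smooth (f(θ) ≤ f(θ') + ⟪∇f(θ'), θ − θ'⟫ + (L/2)‖θ − θ'‖² for all θ, θ'), with 0 < μ ≤ L. Let Δ > 0 and α ∈ (0, 1/2), let θ₀* ∈ E satisfy ∇f(θ₀*) = 0, and let θ_j* ∈ E satisfy ‖θ_j* − θ₀*‖ ≥ Δ. If θ₀, θ_j ∈ E satisfy ‖θ₀ − θ₀*‖ ≤ (1/2 − α)·√(μ/L)·Δ and ‖θ_j − θ_j*‖ ≤ (1/2 − α)·√(μ/L)·Δ, then f(θ_j) − f(θ₀) ≥ α·μ·Δ². -/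

import Mathlib

open scoped RealInnerProductSpace

/-- Key deterministic separation bound in Lemma 1: under strong convexity,
smoothness, and stable initialization, `f(θⱼ) − f(θ₀) ≥ αμΔ²`. -/
theorem loss_gap_lower_bound {E : Type*} [NormedAddCommGroup E]
    [InnerProductSpace ℝ E] [CompleteSpace E]
    (f : E → ℝ) (μ L : ℝ) (hμ : 0 < μ) (hμL : μ ≤ L) (hf : Differentiable ℝ f)
    (hconv : ∀ θ θ' : E,
      f θ ≥ f θ' + ⟪gradient f θ', θ - θ'⟫ + (μ / 2) * ‖θ - θ'‖ ^ 2)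
    (hsmooth : ∀ θ θ' : E,
      f θ ≤ f θ' + ⟪gradient f θ', θ - θ'⟫ + (L / 2) * ‖θ - θ'‖ ^ 2)
    (Δ α : ℝ) (hΔ : 0 < Δ) (hα : α ∈ Set.Ioo (0 : ℝ) (1 / 2))
    (θ0star : E) (hstat : gradient f θ0star = 0)
    (θjstar : E) (hsep : ‖θjstar - θ0star‖ ≥ Δ)
    (θ0 θj : E)
    (hinit0 : ‖θ0 - θ0star‖ ≤ (1 / 2 - α) * Real.sqrt (μ / L) * Δ)
    (hinitj : ‖θj - θjstar‖ ≤ (1 / 2 - α) * Real.sqrt (μ / L) * Δ) :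
    f θj - f θ0 ≥ α * μ * Δ ^ 2 := by
  obtain ⟨hα0, hα2⟩ := hα
  have hL : 0 < L := lt_of_lt_of_le hμ hμL
  set s := Real.sqrt (μ / L) with hs
  have hsnn : 0 ≤ s := Real.sqrt_nonneg _
  have hs2 : s ^ 2 = μ / L := Real.sq_sqrt (by positivity)
  have hs1 : s ≤ 1 := by
    rw [hs, show (1:ℝ) = Real.sqrt 1 by simp]
    exact Real.sqrt_le_sqrt (by rw [div_le_one hL]; exact hμL)
  set r := (1 / 2 - α) * s * Δ with hr
  have hrnn : 0 ≤ r := by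
    apply mul_nonneg (mul_nonneg (by linarith) hsnn) hΔ.le
  -- upper bound on f θ0
  have h1 := hsmooth θ0 θ0star
  rw [hstat] at h1
  simp only [inner_zero_left, add_zero] at h1
  -- lower bound on f θj
  have h2 := hconv θj θ0star
  rw [hstat] at h2
  simp only [inner_zero_left, add_zero] at h2
  -- triangle inequality: ‖θj − θ0star‖ ≥ Δ − r
  have htri : ‖θjstar - θ0star‖ ≤ ‖θjstar - θj‖ + ‖θj - θ0star‖ :=
    norm_sub_le_norm_sub_add_norm_sub _ _ _
  rw [norm_sub_rev θjstar θj] at htri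
  have hlow : Δ - r ≤ ‖θj - θ0star‖ := by linarith
  have hrle : r ≤ (1 / 2 - α) * Δ := by
    rw [hr]
    have : (1 / 2 - α) * s ≤ (1 / 2 - α) * 1 :=
      mul_le_mul_of_nonneg_left hs1 (by linarith)
    nlinarith
  have hDr : 0 ≤ Δ - r := by nlinarith
  have hnsq : (Δ - r) ^ 2 ≤ ‖θj - θ0star‖ ^ 2 := by
    apply pow_le_pow_left₀ hDr hlow
  have hn0sq : ‖θ0 - θ0star‖ ^ 2 ≤ r ^ 2 := by
    apply pow_le_pow_left₀ (norm_nonneg _) hinit0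
  -- now algebra
  have hr2 : r ^ 2 = (1 / 2 - α) ^ 2 * (μ / L) * Δ ^ 2 := by
    rw [hr, mul_pow, mul_pow, hs2]
  have hLr : L / 2 * r ^ 2 = μ / 2 * ((1 / 2 - α) * Δ) ^ 2 := by
    rw [hr2]; field_simp
  have hDr2 : (1 / 2 + α) * Δ ≤ Δ - r := by nlinarith
  have hsq2 : ((1 / 2 + α) * Δ) ^ 2 ≤ (Δ - r) ^ 2 :=
    pow_le_pow_left₀ (by positivity) hDr2 2
  have k1 : μ / 2 * ((1 / 2 + α) * Δ) ^ 2 ≤ μ / 2 * ‖θj - θ0star‖ ^ 2 := by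
    apply mul_le_mul_of_nonneg_left (le_trans hsq2 hnsq) (by positivity)
  have k2 : L / 2 * ‖θ0 - θ0star‖ ^ 2 ≤ μ / 2 * ((1 / 2 - α) * Δ) ^ 2 := by
    rw [← hLr]
    exact mul_le_mul_of_nonneg_left hn0sq (by positivity)
  have heq : μ / 2 * ((1 / 2 + α) * Δ) ^ 2 - μ / 2 * ((1 / 2 - α) * Δ) ^ 2
      = α * μ * Δ ^ 2 := by ring
  linarith
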